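/- Let (X,d) be any metric space and S ⊆ Isom(X) a finite set of isometries. Then for every integer k ≥ 1 one has the chain of inequalities λ(S) ≤ λ_k(S) ≤ λ_∞(S) ≤ ℓ(S) ≤ L(S^k)/k ≤ L(S). Moreover ℓ(S^k) = k·ℓ(S) and λ_∞(S^k) = k·λ_∞(S) for every k ≥ 1, and λ_∞(S) = limsup_{n→∞} λ(S^n)/n. -/

import Mathlib

open Pointwise Filter

/-- The joint displacement of a set of isometries at a point:
`L(S,x) = max_{s ∈ S} d(x, s x)`. -/
noncomputable def jointDispAt {X : Type*} [MetricSpace X] (S : Set (X ≃ᵢ X)) (x : X) : ℝ :=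
  sSup ((fun s : X ≃ᵢ X => dist x (s x)) '' S)

/-- The joint minimal displacement `L(S) = inf_x L(S,x)`. -/
noncomputable def jointMinDisp {X : Type*} [MetricSpace X] (S : Set (X ≃ᵢ X)) : ℝ :=
  sInf (Set.range (jointDispAt S))

/-- The asymptotic joint displacement `ℓ(S) = lim_n L(S^n)/n`; the limit exists by
subadditivity, hence agrees with the `limsup` used here. -/
noncomputable def asympDisp {X : Type*} [MetricSpace X] (S : Set (X ≃ᵢ X)) : ℝ :=
  Filter.limsup (fun n : ℕ => jointMinDisp (S ^ n) / n) Filter.atTop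

/-- `λ(S) = max_{s ∈ S} ℓ(s)`. -/
noncomputable def lamD {X : Type*} [MetricSpace X] (S : Set (X ≃ᵢ X)) : ℝ :=
  sSup ((fun s : X ≃ᵢ X => asympDisp {s}) '' S)

/-- `λ_k(S) = max_{1 ≤ j ≤ k} λ(S^j)/j`. -/
noncomputable def lamK {X : Type*} [MetricSpace X] (k : ℕ) (S : Set (X ≃ᵢ X)) : ℝ :=
  sSup ((fun j : ℕ => lamD (S ^ j) / j) '' Set.Icc 1 k)

/-- `λ_∞(S) = sup_{j ≥ 1} λ(S^j)/j`. -/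
noncomputable def lamInf {X : Type*} [MetricSpace X] (S : Set (X ≃ᵢ X)) : ℝ :=
  sSup ((fun j : ℕ => lamD (S ^ j) / j) '' Set.Ici 1)

/-- A geodesic segment from `a` to `b`: an isometric image of the interval `[0, d(a,b)]`. -/
def IsGeodesicSegment {X : Type*} [MetricSpace X] (s : Set X) (a b : X) : Prop :=
  ∃ f : ℝ → X, f 0 = a ∧ f (dist a b) = b ∧
    (∀ u ∈ Set.Icc (0 : ℝ) (dist a b), ∀ v ∈ Set.Icc (0 : ℝ) (dist a b),
      dist (f u) (f v) = |u - v|) ∧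
    s = f '' Set.Icc (0 : ℝ) (dist a b)

/-- A geodesic metric space: every two points are joined by a geodesic segment. -/
def GeodesicSpace (X : Type*) [MetricSpace X] : Prop :=
  ∀ a b : X, ∃ s : Set X, IsGeodesicSegment s a b

/-- `δ`-hyperbolicity: every geodesic triangle is `δ`-thin, i.e. each side is contained in
the closed `δ`-neighborhood of the union of the other two sides. -/
def GromovHyperbolic (X : Type*) [MetricSpace X] (δ : ℝ) : Prop :=
  ∀ a b c : X, ∀ sab sbc sca : Set X,
    IsGeodesicSegment sab a b → IsGeodesicSegment sbc b c → IsGeodesicSegment sca c a →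
      (∀ x ∈ sab, ∃ y ∈ sbc ∪ sca, dist x y ≤ δ) ∧
      (∀ x ∈ sbc, ∃ y ∈ sab ∪ sca, dist x y ≤ δ) ∧
      (∀ x ∈ sca, ∃ y ∈ sab ∪ sbc, dist x y ≤ δ)

/-- The CAT(0) comparison inequality: for all `a b c` and every midpoint `m` of a geodesic
from `b` to `c`, `2 d(a,m)² ≤ d(a,b)² + d(a,c)² - d(b,c)²/2`. -/
def CAT0 (X : Type*) [MetricSpace X] : Prop :=
  ∀ a b c m : X, dist b m = dist b c / 2 → dist m c = dist b c / 2 →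
    2 * dist a m ^ 2 ≤ dist a b ^ 2 + dist a c ^ 2 - dist b c ^ 2 / 2

/-- A subset is (geodesically) convex if every geodesic segment between two of its points is
contained in it. -/
def GeodConvex {X : Type*} [MetricSpace X] (C : Set X) : Prop :=
  ∀ a ∈ C, ∀ b ∈ C, ∀ s : Set X, IsGeodesicSegment s a b → s ⊆ C

/-- Translation length `L(g) = inf_x d(x, g x)`. -/
noncomputable def transLen {X : Type*} [MetricSpace X] (g : X ≃ᵢ X) : ℝ :=
  sInf (Set.range fun x : X => dist x (g x))

/-- Asymptotic translation length `ℓ(g) = lim_n L(g^n)/n`. -/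
noncomputable def asympTransLen {X : Type*} [MetricSpace X] (g : X ≃ᵢ X) : ℝ :=
  Filter.limsup (fun n : ℕ => transLen (g ^ n) / n) Filter.atTop

section AuxLemmas

open Set Filter Topology

variable {X : Type*} [MetricSpace X]

private lemma finite_pow' {S : Set (X ≃ᵢ X)} (h : S.Finite) (n : ℕ) : (S ^ n).Finite := by
  induction n with
  | zero => simpa using Set.finite_one
  | succ n ih => rw [pow_succ]; exact ih.mul h

private lemma jda_nonneg (S : Set (X ≃ᵢ X)) (x : X) : 0 ≤ jointDispAt S x :=
  Real.sSup_nonneg (by rintro y ⟨s, -, rfl⟩; exact dist_nonneg)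

private lemma dist_le_jda {S : Set (X ≃ᵢ X)} (hfin : S.Finite) {s : X ≃ᵢ X} (hs : s ∈ S)
    (x : X) : dist x (s x) ≤ jointDispAt S x :=
  le_csSup (hfin.image _).bddAbove ⟨s, hs, rfl⟩

private lemma jda_le {S : Set (X ≃ᵢ X)} {x : X} {c : ℝ} (hc : 0 ≤ c)
    (h : ∀ s ∈ S, dist x (s x) ≤ c) : jointDispAt S x ≤ c := by
  apply Real.sSup_le _ hc
  rintro y ⟨s, hs, rfl⟩
  exact h s hs

private lemma jmd_nonneg (S : Set (X ≃ᵢ X)) : 0 ≤ jointMinDisp S :=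
  Real.sInf_nonneg (by rintro y ⟨x, rfl⟩; exact jda_nonneg S x)

private lemma jmd_le_jda (S : Set (X ≃ᵢ X)) (x : X) : jointMinDisp S ≤ jointDispAt S x :=
  csInf_le ⟨0, by rintro y ⟨z, rfl⟩; exact jda_nonneg S z⟩ ⟨x, rfl⟩

private lemma le_jmd [Nonempty X] {S : Set (X ≃ᵢ X)} {c : ℝ}
    (h : ∀ x, c ≤ jointDispAt S x) : c ≤ jointMinDisp S :=
  le_csInf (Set.range_nonempty _) (by rintro y ⟨x, rfl⟩; exact h x)

private lemma jda_subadd {S : Set (X ≃ᵢ X)} (hfin : S.Finite) (x : X) (m n : ℕ) :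
    jointDispAt (S ^ (m + n)) x ≤ jointDispAt (S ^ m) x + jointDispAt (S ^ n) x := by
  apply jda_le (add_nonneg (jda_nonneg _ _) (jda_nonneg _ _))
  intro s hs
  rw [pow_add] at hs
  obtain ⟨a, ha, b, hb, rfl⟩ := hs
  calc dist x ((a * b) x) = dist x (a (b x)) := rfl
    _ ≤ dist x (a x) + dist (a x) (a (b x)) := dist_triangle _ _ _
    _ = dist x (a x) + dist x (b x) := by rw [a.dist_eq]
    _ ≤ _ := add_le_add (dist_le_jda (finite_pow' hfin m) ha x)
        (dist_le_jda (finite_pow' hfin n) hb x)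

private lemma jda_one (x : X) : jointDispAt (1 : Set (X ≃ᵢ X)) x = 0 := by
  have h1 : (1 : Set (X ≃ᵢ X)) = {1} := rfl
  rw [jointDispAt, h1, Set.image_singleton]
  simp only [csSup_singleton]
  exact dist_self x

private lemma jda_pow_le {S : Set (X ≃ᵢ X)} (hfin : S.Finite) (x : X) (n : ℕ) :
    jointDispAt (S ^ n) x ≤ n * jointDispAt S x := by
  induction n with
  | zero => simp [jda_one]
  | succ n ih =>
    have h := jda_subadd hfin x n 1
    rw [pow_one] at h
    have : ((n : ℝ) + 1) * jointDispAt S x = n * jointDispAt S x + jointDispAt S x := by ring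
    push_cast
    rw [this]
    exact h.trans (add_le_add_left ih _)

private lemma subaddAt {S : Set (X ≃ᵢ X)} (hfin : S.Finite) (x : X) :
    Subadditive (fun n => jointDispAt (S ^ n) x) :=
  fun m n => jda_subadd hfin x m n

/-- The per-point stable displacement `ℓ(S,x) = lim_n L(S^n, x)/n`. -/
private noncomputable def ellAt (S : Set (X ≃ᵢ X)) (x : X) : ℝ :=
  sInf ((fun n : ℕ => jointDispAt (S ^ n) x / n) '' Set.Ici 1)

private lemma bddBelow_dispSeq (S : Set (X ≃ᵢ X)) (x : X) :
    BddBelow (Set.range fun n : ℕ => jointDispAt (S ^ n) x / n) := by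
  refine ⟨0, ?_⟩
  rintro y ⟨n, rfl⟩
  exact div_nonneg (jda_nonneg _ _) (Nat.cast_nonneg _)

private lemma tendsto_ellAt {S : Set (X ≃ᵢ X)} (hfin : S.Finite) (x : X) :
    Tendsto (fun n : ℕ => jointDispAt (S ^ n) x / n) atTop (𝓝 (ellAt S x)) :=
  by have h := (subaddAt hfin x).tendsto_lim (bddBelow_dispSeq S x); rw [Subadditive.lim] at h; exact h

private lemma ellAt_nonneg {S : Set (X ≃ᵢ X)} (hfin : S.Finite) (x : X) : 0 ≤ ellAt S x :=
  ge_of_tendsto (tendsto_ellAt hfin x)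
    (Eventually.of_forall fun n => div_nonneg (jda_nonneg _ _) (Nat.cast_nonneg _))

private lemma ellAt_le_div (S : Set (X ≃ᵢ X)) (x : X) {n : ℕ} (hn : 1 ≤ n) :
    ellAt S x ≤ jointDispAt (S ^ n) x / n :=
  csInf_le ((bddBelow_dispSeq S x).mono (Set.image_subset_range _ _)) ⟨n, hn, rfl⟩

private lemma bddBelow_range_ellAt {S : Set (X ≃ᵢ X)} (hfin : S.Finite) :
    BddBelow (Set.range (ellAt S)) := by
  refine ⟨0, ?_⟩
  rintro y ⟨x, rfl⟩
  exact ellAt_nonneg hfin x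

private lemma dispSeq_nonneg (S : Set (X ≃ᵢ X)) (n : ℕ) :
    0 ≤ jointMinDisp (S ^ n) / n :=
  div_nonneg (jmd_nonneg _) (Nat.cast_nonneg _)

private lemma dispSeq_le {S : Set (X ≃ᵢ X)} (hfin : S.Finite) (x0 : X) (n : ℕ) :
    jointMinDisp (S ^ n) / n ≤ jointDispAt S x0 := by
  rcases Nat.eq_zero_or_pos n with rfl | hn
  · simpa using jda_nonneg S x0
  · have hn' : (0:ℝ) < n := by exact_mod_cast hn
    rw [div_le_iff₀ hn']
    calc jointMinDisp (S ^ n) ≤ jointDispAt (S ^ n) x0 := jmd_le_jda _ _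
      _ ≤ n * jointDispAt S x0 := jda_pow_le hfin x0 n
      _ = jointDispAt S x0 * n := by ring

private lemma dispSeq_bddAbove [Nonempty X] {S : Set (X ≃ᵢ X)} (hfin : S.Finite) :
    IsBoundedUnder (· ≤ ·) atTop (fun n : ℕ => jointMinDisp (S ^ n) / n) :=
  ⟨jointDispAt S (Classical.arbitrary X),
    Filter.eventually_map.2 (Eventually.of_forall (dispSeq_le hfin _))⟩

private lemma dispSeq_cobdd (S : Set (X ≃ᵢ X)) :
    IsCoboundedUnder (· ≤ ·) atTop (fun n : ℕ => jointMinDisp (S ^ n) / n) :=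
  IsBoundedUnder.isCoboundedUnder_le
    ⟨0, Filter.eventually_map.2 (Eventually.of_forall (dispSeq_nonneg S))⟩

/-- The key identity: `ℓ(S) = inf_x ℓ(S,x)`. -/
private lemma asympDisp_eq [Nonempty X] {S : Set (X ≃ᵢ X)} (hfin : S.Finite) :
    asympDisp S = sInf (Set.range (ellAt S)) := by
  apply le_antisymm
  · apply le_csInf (Set.range_nonempty _)
    rintro y ⟨x, rfl⟩
    have hle : ∀ n : ℕ, jointMinDisp (S ^ n) / n ≤ jointDispAt (S ^ n) x / n := by
      intro n
      rcases Nat.eq_zero_or_pos n with rfl | hn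
      · simp
      · have hn' : (0:ℝ) < n := by exact_mod_cast hn
        exact div_le_div_of_nonneg_right (jmd_le_jda _ _) hn'.le
    calc asympDisp S ≤ limsup (fun n : ℕ => jointDispAt (S ^ n) x / n) atTop :=
          limsup_le_limsup (Eventually.of_forall hle) (dispSeq_cobdd S)
            (tendsto_ellAt hfin x).isBoundedUnder_le
      _ = ellAt S x := (tendsto_ellAt hfin x).limsup_eq
  · apply le_limsup_of_frequently_le _ (dispSeq_bddAbove hfin)
    apply ((eventually_ge_atTop 1).mono _).frequently
    intro n hn
    have hn' : (0:ℝ) < n := by exact_mod_cast hn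
    rw [le_div_iff₀ hn']
    apply le_jmd
    intro x
    have h1 : sInf (Set.range (ellAt S)) ≤ ellAt S x :=
      csInf_le (bddBelow_range_ellAt hfin) ⟨x, rfl⟩
    have h2 : ellAt S x ≤ jointDispAt (S ^ n) x / n := ellAt_le_div S x hn
    calc sInf (Set.range (ellAt S)) * n ≤ (jointDispAt (S ^ n) x / n) * n :=
          mul_le_mul_of_nonneg_right (h1.trans h2) hn'.le
      _ = jointDispAt (S ^ n) x := by field_simp

private lemma ellAt_pow {S : Set (X ≃ᵢ X)} (hfin : S.Finite) (x : X) {k : ℕ} (hk : 1 ≤ k) :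
    ellAt (S ^ k) x = k * ellAt S x := by
  have hk0 : (k:ℝ) ≠ 0 := by positivity
  have h1 : Tendsto (fun n : ℕ => jointDispAt ((S ^ k) ^ n) x / n) atTop
      (𝓝 (ellAt (S ^ k) x)) := tendsto_ellAt (finite_pow' hfin k) x
  have hmul : Tendsto (fun n : ℕ => k * n) atTop atTop :=
    tendsto_atTop_mono (fun n => Nat.le_mul_of_pos_left n (by omega)) tendsto_id
  have h2 : Tendsto (fun n : ℕ => (k:ℝ) *
      (jointDispAt (S ^ (k * n)) x / ((k * n : ℕ) : ℝ))) atTop (𝓝 ((k:ℝ) * ellAt S x)) :=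
    ((tendsto_ellAt hfin x).comp hmul).const_mul _
  refine tendsto_nhds_unique h1 (h2.congr' ?_)
  filter_upwards [eventually_ge_atTop 1] with n hn
  have hn0 : (n:ℝ) ≠ 0 := by positivity
  rw [← pow_mul]
  push_cast
  rw [← mul_div_assoc, mul_div_mul_left _ _ hk0]

private lemma asympDisp_nonneg [Nonempty X] {S : Set (X ≃ᵢ X)} (hfin : S.Finite) :
    0 ≤ asympDisp S :=
  le_limsup_of_frequently_le
    ((Eventually.of_forall (dispSeq_nonneg S)).frequently) (dispSeq_bddAbove hfin)

private lemma asympDisp_pow [Nonempty X] {S : Set (X ≃ᵢ X)} (hfin : S.Finite) {k : ℕ}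
    (hk : 1 ≤ k) : asympDisp (S ^ k) = k * asympDisp S := by
  have hk' : (0:ℝ) < k := by exact_mod_cast hk
  rw [asympDisp_eq (finite_pow' hfin k), asympDisp_eq hfin]
  have hE : ∀ x, ellAt (S ^ k) x = k * ellAt S x := fun x => ellAt_pow hfin x hk
  apply le_antisymm
  · rw [← div_le_iff₀' hk']
    apply le_csInf (Set.range_nonempty _)
    rintro y ⟨x, rfl⟩
    rw [div_le_iff₀' hk', ← hE x]
    exact csInf_le (bddBelow_range_ellAt (finite_pow' hfin k)) ⟨x, rfl⟩
  · apply le_csInf (Set.range_nonempty _)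
    rintro y ⟨x, rfl⟩
    rw [hE x]
    exact mul_le_mul_of_nonneg_left (csInf_le (bddBelow_range_ellAt hfin) ⟨x, rfl⟩) hk'.le

private lemma asympDisp_mono [Nonempty X] {T S : Set (X ≃ᵢ X)} (hfin : S.Finite)
    (hTne : T.Nonempty) (hT : T ⊆ S) : asympDisp T ≤ asympDisp S := by
  apply limsup_le_limsup (Eventually.of_forall fun n => ?_) (dispSeq_cobdd T)
    (dispSeq_bddAbove hfin)
  rcases Nat.eq_zero_or_pos n with rfl | hn
  · simp
  · have hn' : (0:ℝ) < n := by exact_mod_cast hn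
    have hsub : (T ^ n : Set (X ≃ᵢ X)) ⊆ S ^ n := Set.pow_subset_pow_left hT
    have h1 : jointMinDisp (T ^ n) ≤ jointMinDisp (S ^ n) := by
      apply le_csInf (Set.range_nonempty _)
      rintro y ⟨x, rfl⟩
      refine (jmd_le_jda _ x).trans ?_
      exact csSup_le_csSup ((finite_pow' hfin n).image _).bddAbove
        ((hTne.pow).image _) (Set.image_mono hsub)
    exact div_le_div_of_nonneg_right h1 hn'.le

private lemma lamD_nonneg [Nonempty X] (S : Set (X ≃ᵢ X)) : 0 ≤ lamD S :=
  Real.sSup_nonneg (by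
    rintro y ⟨s, hs, rfl⟩
    exact asympDisp_nonneg (Set.finite_singleton s))

private lemma lamD_le_asympDisp [Nonempty X] {S : Set (X ≃ᵢ X)} (hfin : S.Finite)
    (hne : S.Nonempty) : lamD S ≤ asympDisp S := by
  apply csSup_le (hne.image _)
  rintro y ⟨s, hs, rfl⟩
  exact asympDisp_mono hfin (Set.singleton_nonempty s) (Set.singleton_subset_iff.2 hs)

/-- Key superadditivity: `j · λ(S^m) ≤ λ(S^(m·j))`. -/
private lemma lamD_pow_key [Nonempty X] {S : Set (X ≃ᵢ X)} (hfin : S.Finite) {j : ℕ}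
    (hj : 1 ≤ j) (m : ℕ) : (j:ℝ) * lamD (S ^ m) ≤ lamD (S ^ (m * j)) := by
  have hj' : (0:ℝ) < j := by exact_mod_cast hj
  rw [mul_comm ((j:ℝ)), ← le_div_iff₀ hj']
  apply Real.sSup_le _ (div_nonneg (lamD_nonneg _) hj'.le)
  rintro y ⟨s, hs, rfl⟩
  rw [le_div_iff₀ hj']
  have h1 : asympDisp ({s} ^ j : Set (X ≃ᵢ X)) = j * asympDisp {s} :=
    asympDisp_pow (Set.finite_singleton s) hj
  rw [Set.singleton_pow] at h1
  have hmem : s ^ j ∈ S ^ (m * j) := by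
    rw [pow_mul]
    exact Set.pow_mem_pow hs
  have h2 : asympDisp ({s ^ j} : Set (X ≃ᵢ X)) ≤ lamD (S ^ (m * j)) :=
    le_csSup ((finite_pow' hfin _).image _).bddAbove ⟨s ^ j, hmem, rfl⟩
  calc asympDisp ({s} : Set (X ≃ᵢ X)) * j = j * asympDisp {s} := by ring
    _ = asympDisp ({s ^ j} : Set (X ≃ᵢ X)) := h1.symm
    _ ≤ lamD (S ^ (m * j)) := h2

private lemma lamD_div_le [Nonempty X] {S : Set (X ≃ᵢ X)} (hfin : S.Finite)
    (hne : S.Nonempty) {j : ℕ} (hj : 1 ≤ j) : lamD (S ^ j) / j ≤ asympDisp S := by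
  have hj' : (0:ℝ) < j := by exact_mod_cast hj
  rw [div_le_iff₀ hj', mul_comm]
  exact (lamD_le_asympDisp (finite_pow' hfin j) hne.pow).trans_eq (asympDisp_pow hfin hj)

end AuxLemmas

/-- For any metric space `X` and finite set `S` of isometries of `X`, for
every `k ≥ 1` one has `λ(S) ≤ λ_k(S) ≤ λ_∞(S) ≤ ℓ(S) ≤ L(S^k)/k ≤ L(S)`; moreover
`ℓ(S^k) = k ℓ(S)`, `λ_∞(S^k) = k λ_∞(S)`, and `λ_∞(S) = limsup_n λ(S^n)/n`. -/
theorem general_nonsense_lemma {X : Type*} [MetricSpace X] (S : Set (X ≃ᵢ X))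
    (hfin : S.Finite) (hne : S.Nonempty) (k : ℕ) (hk : 1 ≤ k) :
    (lamD S ≤ lamK k S ∧ lamK k S ≤ lamInf S ∧ lamInf S ≤ asympDisp S ∧
      asympDisp S ≤ jointMinDisp (S ^ k) / k ∧ jointMinDisp (S ^ k) / k ≤ jointMinDisp S) ∧
    asympDisp (S ^ k) = k * asympDisp S ∧
    lamInf (S ^ k) = k * lamInf S ∧
    lamInf S = Filter.limsup (fun n : ℕ => lamD (S ^ n) / n) Filter.atTop := by
  rcases isEmpty_or_nonempty X with hX | hX
  · -- Degenerate case: `X` is empty, every quantity vanishes.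
    have hjmd : ∀ T : Set (X ≃ᵢ X), jointMinDisp T = 0 := by
      intro T
      rw [jointMinDisp, Set.range_eq_empty, Real.sInf_empty]
    have hasymp : ∀ T : Set (X ≃ᵢ X), asympDisp T = 0 := by
      intro T
      have h : (fun n : ℕ => jointMinDisp (T ^ n) / n) = fun _ => (0:ℝ) :=
        funext fun n => by rw [hjmd, zero_div]
      rw [asympDisp, h, Filter.limsup_const]
    have hlamD : ∀ T : Set (X ≃ᵢ X), T.Nonempty → lamD T = 0 := by
      intro T hT
      have h : (fun s : X ≃ᵢ X => asympDisp {s}) '' T = {0} := by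
        rw [show (fun s : X ≃ᵢ X => asympDisp {s}) = fun _ => (0:ℝ) from
          funext fun s => hasymp _]
        exact hT.image_const 0
      rw [lamD, h, csSup_singleton]
    have hfun : (fun j : ℕ => lamD (S ^ j) / j) = fun _ => (0:ℝ) :=
      funext fun j => by rw [hlamD _ hne.pow, zero_div]
    have hfunk : (fun j : ℕ => lamD ((S ^ k) ^ j) / j) = fun _ => (0:ℝ) :=
      funext fun j => by rw [hlamD _ (Set.Nonempty.pow hne.pow), zero_div]
    have hlamK : lamK k S = 0 := by
      have h : (fun j : ℕ => lamD (S ^ j) / j) '' Set.Icc 1 k = {0} := by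
        rw [hfun]; exact (Set.nonempty_Icc.2 hk).image_const 0
      rw [lamK, h, csSup_singleton]
    have hlamInfS : lamInf S = 0 := by
      have h : (fun j : ℕ => lamD (S ^ j) / j) '' Set.Ici 1 = {0} := by
        rw [hfun]; exact Set.nonempty_Ici.image_const 0
      rw [lamInf, h, csSup_singleton]
    have hlamInfSk : lamInf (S ^ k) = 0 := by
      have h : (fun j : ℕ => lamD ((S ^ k) ^ j) / j) '' Set.Ici 1 = {0} := by
        rw [hfunk]; exact Set.nonempty_Ici.image_const 0
      rw [lamInf, h, csSup_singleton]
    refine ⟨⟨?_, ?_, ?_, ?_, ?_⟩, ?_, ?_, ?_⟩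
    · rw [hlamD S hne, hlamK]
    · rw [hlamK, hlamInfS]
    · rw [hlamInfS, hasymp]
    · rw [hasymp, hjmd, zero_div]
    · rw [hjmd, hjmd, zero_div]
    · rw [hasymp, hasymp, mul_zero]
    · rw [hlamInfSk, hlamInfS, mul_zero]
    · rw [hlamInfS, hfun, Filter.limsup_const]
  · -- Main case: `X` is nonempty.
    have hk' : (0:ℝ) < k := by exact_mod_cast hk
    have hbddInf : ∀ T : Set (X ≃ᵢ X), T.Finite → T.Nonempty →
        BddAbove ((fun j : ℕ => lamD (T ^ j) / j) '' Set.Ici 1) := by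
      intro T hfinT hneT
      refine ⟨asympDisp T, ?_⟩
      rintro y ⟨j, hj, rfl⟩
      exact lamD_div_le hfinT hneT (Set.mem_Ici.1 hj)
    have c1 : lamD S ≤ lamK k S := by
      have hmem : lamD S ∈ (fun j : ℕ => lamD (S ^ j) / j) '' Set.Icc 1 k :=
        ⟨1, Set.mem_Icc.2 ⟨le_rfl, hk⟩, by simp [pow_one]⟩
      exact le_csSup ((Set.finite_Icc 1 k).image _).bddAbove hmem
    have c2 : lamK k S ≤ lamInf S := by
      apply csSup_le ((Set.nonempty_Icc.2 hk).image _)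
      rintro y ⟨j, hj, rfl⟩
      exact le_csSup (hbddInf S hfin hne) ⟨j, (Set.mem_Icc.1 hj).1, rfl⟩
    have c3 : lamInf S ≤ asympDisp S := by
      apply csSup_le (Set.nonempty_Ici.image _)
      rintro y ⟨j, hj, rfl⟩
      exact lamD_div_le hfin hne (Set.mem_Ici.1 hj)
    have c4 : asympDisp S ≤ jointMinDisp (S ^ k) / k := by
      rw [le_div_iff₀ hk']
      apply le_jmd
      intro x
      have h1 : asympDisp S ≤ ellAt S x := by
        rw [asympDisp_eq hfin]
        exact csInf_le (bddBelow_range_ellAt hfin) ⟨x, rfl⟩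
      have h2 : ellAt S x ≤ jointDispAt (S ^ k) x / k := ellAt_le_div S x hk
      calc asympDisp S * k ≤ jointDispAt (S ^ k) x / k * k :=
            mul_le_mul_of_nonneg_right (h1.trans h2) hk'.le
        _ = jointDispAt (S ^ k) x := div_mul_cancel₀ _ hk'.ne'
    have c5 : jointMinDisp (S ^ k) / k ≤ jointMinDisp S := by
      apply le_jmd
      intro x
      rw [div_le_iff₀ hk']
      calc jointMinDisp (S ^ k) ≤ jointDispAt (S ^ k) x := jmd_le_jda _ _
        _ ≤ k * jointDispAt S x := jda_pow_le hfin x k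
        _ = jointDispAt S x * k := by ring
    have c6 : asympDisp (S ^ k) = k * asympDisp S := asympDisp_pow hfin hk
    have hfink := finite_pow' hfin k
    have hnek : (S ^ k).Nonempty := hne.pow
    have c7 : lamInf (S ^ k) = k * lamInf S := by
      apply le_antisymm
      · apply csSup_le (Set.nonempty_Ici.image _)
        rintro y ⟨j, hj, rfl⟩
        have hj1 : 1 ≤ j := Set.mem_Ici.1 hj
        have hj' : (0:ℝ) < j := by exact_mod_cast hj1
        have hkj : 1 ≤ k * j := Nat.mul_pos hk hj1
        have h1 : lamD (S ^ (k * j)) / ((k * j : ℕ) : ℝ) ≤ lamInf S :=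
          le_csSup (hbddInf S hfin hne) ⟨k * j, hkj, rfl⟩
        have hcast : ((k * j : ℕ) : ℝ) = (k : ℝ) * j := by push_cast; ring
        show lamD ((S ^ k) ^ j) / (j:ℝ) ≤ (k:ℝ) * lamInf S
        rw [← pow_mul]
        calc lamD (S ^ (k * j)) / (j:ℝ)
            = (k:ℝ) * (lamD (S ^ (k * j)) / ((k:ℝ) * j)) := by
              rw [← mul_div_assoc, mul_div_mul_left _ _ hk'.ne']
          _ ≤ k * lamInf S := by
              refine mul_le_mul_of_nonneg_left ?_ hk'.le
              rw [← hcast]; exact h1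
      · rw [mul_comm, ← le_div_iff₀ hk']
        apply csSup_le (Set.nonempty_Ici.image _)
        rintro y ⟨j, hj, rfl⟩
        have hj1 : 1 ≤ j := Set.mem_Ici.1 hj
        have hj' : (0:ℝ) < j := by exact_mod_cast hj1
        have hkey := lamD_pow_key hfin hk j
        have h2 : lamD ((S ^ k) ^ j) / (j:ℝ) ≤ lamInf (S ^ k) :=
          le_csSup (hbddInf _ hfink hnek) ⟨j, hj1, rfl⟩
        have hrw : (S ^ k) ^ j = S ^ (j * k) := by rw [← pow_mul, mul_comm]
        rw [hrw] at h2
        rw [le_div_iff₀ hk']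
        calc lamD (S ^ j) / (j:ℝ) * k = (k:ℝ) * lamD (S ^ j) / j := by ring
          _ ≤ lamD (S ^ (j * k)) / j := div_le_div_of_nonneg_right hkey hj'.le
          _ ≤ lamInf (S ^ k) := h2
    have c8 : lamInf S = Filter.limsup (fun n : ℕ => lamD (S ^ n) / n) Filter.atTop := by
      have hwbdd : IsBoundedUnder (· ≤ ·) atTop (fun n : ℕ => lamD (S ^ n) / n) := by
        refine ⟨asympDisp S, Filter.eventually_map.2 (Eventually.of_forall fun n => ?_)⟩
        rcases Nat.eq_zero_or_pos n with rfl | hn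
        · simpa using asympDisp_nonneg hfin
        · exact lamD_div_le hfin hne hn
      apply le_antisymm
      · apply csSup_le (Set.nonempty_Ici.image _)
        rintro y ⟨j, hj, rfl⟩
        have hj1 : 1 ≤ j := Set.mem_Ici.1 hj
        have hj' : (0:ℝ) < j := by exact_mod_cast hj1
        apply le_limsup_of_frequently_le _ hwbdd
        rw [frequently_atTop]
        intro N
        refine ⟨j * max N 1, ?_, ?_⟩
        · calc N ≤ max N 1 := le_max_left _ _
            _ ≤ j * max N 1 := Nat.le_mul_of_pos_left _ hj1
        · have hm1 : 1 ≤ max N 1 := le_max_right _ _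
          have hm' : (0:ℝ) < (max N 1 : ℕ) := by exact_mod_cast hm1
          have hkey := lamD_pow_key hfin hm1 j
          have hcast : ((j * max N 1 : ℕ) : ℝ) = (j:ℝ) * (max N 1 : ℕ) := by push_cast; ring
          rw [hcast, div_le_div_iff₀ hj' (by positivity)]
          calc lamD (S ^ j) * ((j:ℝ) * (max N 1 : ℕ))
              = ((max N 1 : ℕ) : ℝ) * lamD (S ^ j) * j := by ring
            _ ≤ lamD (S ^ (j * max N 1)) * j :=
              mul_le_mul_of_nonneg_right hkey hj'.le
      · apply Filter.limsup_le_of_le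
        · exact IsBoundedUnder.isCoboundedUnder_le
            ⟨0, Filter.eventually_map.2 (Eventually.of_forall fun n =>
              div_nonneg (lamD_nonneg _) (Nat.cast_nonneg _))⟩
        · filter_upwards [eventually_ge_atTop 1] with n hn
          exact le_csSup (hbddInf S hfin hne) ⟨n, hn, rfl⟩
    exact ⟨⟨c1, c2, c3, c4, c5⟩, c6, c7, c8⟩
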